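/- The explicit values of the edge degree deg(λ →ᵢ μ) := #{μ' < μ in Bruhat order with λ →ᵢ μ'} − #{λ' > λ with λ' →ᵢ μ} for the eight local moves ∨∘→∘∨, ∧∘→∘∧, ×∨→∨×, ×∧→∧×, ×∘→∨∧, ×∘→∧∨, ∨∧→∘×, ∧∨→∘× are respectively 0, 0, 0, 0, 0, 1, −1, 0. -/

import Mathlib

/-- Labels of the vertices of a weight diagram. -/
inductive WLabel : Type
  | o | up | down | x
deriving DecidableEq

/-- A weight diagram: a labelling of ℤ which is `∧` far to the left and `∨`
far to the right. -/
def IsWeightDiagram (w : ℤ → WLabel) : Prop :=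
  ∃ a b : ℤ, (∀ i : ℤ, i < a → w i = .up) ∧ (∀ i : ℤ, b < i → w i = .down)

/-- One generating move of the Bruhat order: swap a `∨` at `p` with an `∧` at
`q > p` (so `∨`'s move to the right, i.e. the weight gets bigger). -/
def BruhatStep (w w' : ℤ → WLabel) : Prop :=
  ∃ p q : ℤ, p < q ∧ w p = .down ∧ w q = .up ∧ w' p = .up ∧ w' q = .down ∧
    ∀ x : ℤ, x ≠ p → x ≠ q → w' x = w x

/-- The Bruhat order on weight diagrams. -/
def BruhatLE : (ℤ → WLabel) → (ℤ → WLabel) → Prop := Relation.ReflTransGen BruhatStep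

def BruhatLT (w w' : ℤ → WLabel) : Prop := BruhatLE w w' ∧ w ≠ w'

/-- The eight allowed local configurations of the labels of `λ` and `μ` at the
vertices `i`, `i+1` for an edge `λ →ᵢ μ`. -/
def EPattern : WLabel × WLabel → WLabel × WLabel → Prop := fun a b =>
  (a = (.down, .o) ∧ b = (.o, .down)) ∨
  (a = (.up, .o) ∧ b = (.o, .up)) ∨
  (a = (.x, .down) ∧ b = (.down, .x)) ∨
  (a = (.x, .up) ∧ b = (.up, .x)) ∨
  (a = (.x, .o) ∧ b = (.down, .up)) ∨
  (a = (.x, .o) ∧ b = (.up, .down)) ∨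
  (a = (.down, .up) ∧ b = (.o, .x)) ∨
  (a = (.up, .down) ∧ b = (.o, .x))

/-- The edge relation `λ →ᵢ μ`: the weights agree outside vertices `i`, `i+1`,
where the labels change by one of the eight allowed moves. -/
def ERel (i : ℤ) (l m : ℤ → WLabel) : Prop :=
  (∀ j : ℤ, j ≠ i → j ≠ i + 1 → m j = l j) ∧
  EPattern (l i, l (i + 1)) (m i, m (i + 1))

/-- The edge degree
`deg(λ →ᵢ μ) = #{μ' < μ : λ →ᵢ μ'} − #{λ' > λ : λ' →ᵢ μ}`. -/
noncomputable def edgeDegree (i : ℤ) (l m : ℤ → WLabel) : ℤ :=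
  (Nat.card {m' : ℤ → WLabel // ERel i l m' ∧ BruhatLT m' m} : ℤ)
    - (Nat.card {l' : ℤ → WLabel // ERel i l' m ∧ BruhatLT l l'} : ℤ)

namespace EDaux

/-! ### A monovariant for the Bruhat order -/

/-- The set of positions `≤ t` labelled `∨` (down). -/
def D (w : ℤ → WLabel) (t : ℤ) : Set ℤ := {j | j ≤ t ∧ w j = .down}

lemma D_finite {w : ℤ → WLabel} (hw : IsWeightDiagram w) (t : ℤ) : (D w t).Finite := by
  obtain ⟨a, b, ha, hb⟩ := hw
  apply (Set.finite_Icc a t).subset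
  rintro j ⟨hj, hd⟩
  refine ⟨?_, hj⟩
  by_contra hc
  push_neg at hc
  rw [ha j hc] at hd
  exact absurd hd (by decide)

lemma step_wd {w w' : ℤ → WLabel} (h : BruhatStep w w') (hw : IsWeightDiagram w) :
    IsWeightDiagram w' := by
  obtain ⟨p, q, hpq, hup, huq, hvp, hvq, hoff⟩ := h
  obtain ⟨a, b, ha, hb⟩ := hw
  refine ⟨min a p, max b q, fun j hj => ?_, fun j hj => ?_⟩
  · rcases eq_or_ne j p with rfl | hjp
    · exact hvp
    · rw [hoff j hjp (by omega)]
      exact ha j (by omega)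
  · rcases eq_or_ne j q with rfl | hjq
    · exact hvq
    · rw [hoff j (by omega) hjq]
      exact hb j (by omega)

lemma D_step_le {u v : ℤ → WLabel} (h : BruhatStep u v) (t : ℤ) (hfin : (D u t).Finite) :
    (D v t).ncard ≤ (D u t).ncard := by
  obtain ⟨p, q, hpq, hup, huq, hvp, hvq, hoff⟩ := h
  rcases le_or_gt q t with hqt | htq
  · have hDv : D v t = insert q (D u t \ {p}) := by
      ext j
      simp only [D, Set.mem_insert_iff, Set.mem_diff, Set.mem_setOf_eq, Set.mem_singleton_iff]
      constructor
      · rintro ⟨hjt, hj⟩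
        rcases eq_or_ne j q with rfl | hjq
        · exact Or.inl rfl
        rcases eq_or_ne j p with rfl | hjp
        · rw [hvp] at hj; exact absurd hj (by decide)
        · exact Or.inr ⟨⟨hjt, by rwa [hoff j hjp hjq] at hj⟩, hjp⟩
      · rintro (rfl | ⟨⟨hjt, hj⟩, hjp⟩)
        · exact ⟨hqt, hvq⟩
        · rcases eq_or_ne j q with rfl | hjq
          · exact ⟨hqt, hvq⟩
          · exact ⟨hjt, by rw [hoff j hjp hjq]; exact hj⟩
    have hpmem : p ∈ D u t := ⟨by omega, hup⟩
    have hqmem : q ∉ D u t \ {p} := fun hq => absurd hq.1.2 (by rw [huq]; decide)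
    rw [hDv, Set.ncard_insert_of_notMem hqmem hfin.diff,
      Set.ncard_diff_singleton_of_mem hpmem]
    have : 0 < (D u t).ncard := (Set.ncard_pos hfin).2 ⟨p, hpmem⟩
    omega
  rcases le_or_gt p t with hpt | htp
  · have hDv : D v t = D u t \ {p} := by
      ext j
      simp only [D, Set.mem_diff, Set.mem_setOf_eq, Set.mem_singleton_iff]
      constructor
      · rintro ⟨hjt, hj⟩
        rcases eq_or_ne j p with rfl | hjp
        · rw [hvp] at hj; exact absurd hj (by decide)
        · exact ⟨⟨hjt, by rwa [hoff j hjp (by omega)] at hj⟩, hjp⟩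
      · rintro ⟨⟨hjt, hj⟩, hjp⟩
        exact ⟨hjt, by rw [hoff j hjp (by omega)]; exact hj⟩
    rw [hDv]
    exact Set.ncard_le_ncard Set.diff_subset hfin
  · have hDv : D v t = D u t := by
      ext j
      simp only [D, Set.mem_setOf_eq]
      constructor
      · rintro ⟨hjt, hj⟩
        exact ⟨hjt, by rwa [hoff j (by omega) (by omega)] at hj⟩
      · rintro ⟨hjt, hj⟩
        exact ⟨hjt, by rw [hoff j (by omega) (by omega)]; exact hj⟩
    rw [hDv]

lemma le_D {w w' : ℤ → WLabel} (hw : IsWeightDiagram w) (h : BruhatLE w w') :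
    IsWeightDiagram w' ∧ ∀ t, (D w' t).ncard ≤ (D w t).ncard := by
  induction h with
  | refl => exact ⟨hw, fun _ => le_rfl⟩
  | tail _ hstep ih =>
      exact ⟨step_wd hstep ih.1,
        fun t => le_trans (D_step_le hstep t (D_finite ih.1 t)) (ih.2 t)⟩

/-- Bruhat covers are strict: a step cannot be undone. -/
lemma not_le_of_step {w w' : ℤ → WLabel} (hstep : BruhatStep w w') (hw : IsWeightDiagram w) :
    ¬ BruhatLE w' w := by
  intro hle
  have hw' := step_wd hstep hw
  have hmono := (le_D hw' hle).2
  obtain ⟨p, q, hpq, hup, huq, hvp, hvq, hoff⟩ := hstep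
  have hDv : D w' p = D w p \ {p} := by
    ext j
    simp only [D, Set.mem_diff, Set.mem_setOf_eq, Set.mem_singleton_iff]
    constructor
    · rintro ⟨hjt, hj⟩
      rcases eq_or_ne j p with rfl | hjp
      · rw [hvp] at hj; exact absurd hj (by decide)
      · exact ⟨⟨hjt, by rwa [hoff j hjp (by omega)] at hj⟩, hjp⟩
    · rintro ⟨⟨hjt, hj⟩, hjp⟩
      exact ⟨hjt, by rw [hoff j hjp (by omega)]; exact hj⟩
  have hpmem : p ∈ D w p := ⟨le_rfl, hup⟩
  have hlt : (D w' p).ncard < (D w p).ncard := by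
    rw [hDv]
    exact Set.ncard_diff_singleton_lt_of_mem hpmem (D_finite hw p)
  exact absurd (hmono p) (by omega)

/-! ### Local modifications -/

def patch (w : ℤ → WLabel) (i : ℤ) (a b : WLabel) : ℤ → WLabel :=
  fun j => if j = i then a else if j = i + 1 then b else w j

@[simp] lemma patch_i (w : ℤ → WLabel) (i : ℤ) (a b : WLabel) : patch w i a b i = a := by
  simp [patch]

@[simp] lemma patch_i1 (w : ℤ → WLabel) (i : ℤ) (a b : WLabel) :
    patch w i a b (i + 1) = b := by
  simp [patch, (by omega : i + 1 ≠ i)]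

lemma patch_off (w : ℤ → WLabel) (i : ℤ) (a b : WLabel) {j : ℤ} (hj : j ≠ i)
    (hj1 : j ≠ i + 1) : patch w i a b j = w j := by
  simp [patch, hj, hj1]

lemma wd_patch {w : ℤ → WLabel} (hw : IsWeightDiagram w) (i : ℤ) (a b : WLabel) :
    IsWeightDiagram (patch w i a b) := by
  obtain ⟨c, d, hc, hd⟩ := hw
  refine ⟨min c i, max d (i + 1), fun j hj => ?_, fun j hj => ?_⟩
  · rw [patch_off w i a b (by omega) (by omega)]
    exact hc j (by omega)
  · rw [patch_off w i a b (by omega) (by omega)]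
    exact hd j (by omega)

lemma erel_patch {i : ℤ} {l : ℤ → WLabel} {a b : WLabel}
    (hpat : EPattern (l i, l (i + 1)) (a, b)) : ERel i l (patch l i a b) := by
  refine ⟨fun j hj hj1 => patch_off l i a b hj hj1, ?_⟩
  rw [patch_i, patch_i1]
  exact hpat

/-- Two right endpoints of an edge from `l` with the same labels at `i`, `i+1` agree. -/
lemma erel_ext {i : ℤ} {l m m' : ℤ → WLabel} (h : ERel i l m) (h' : ERel i l m')
    (hi : m' i = m i) (hi1 : m' (i + 1) = m (i + 1)) : m' = m := by
  funext j
  rcases eq_or_ne j i with rfl | hj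
  · exact hi
  rcases eq_or_ne j (i + 1) with rfl | hj1
  · exact hi1
  · rw [h'.1 j hj hj1, h.1 j hj hj1]

/-- Two left endpoints of an edge to `m` with the same labels at `i`, `i+1` agree. -/
lemma erel_extL {i : ℤ} {m l1 l2 : ℤ → WLabel} (h1 : ERel i l1 m) (h2 : ERel i l2 m)
    (hi : l2 i = l1 i) (hi1 : l2 (i + 1) = l1 (i + 1)) : l2 = l1 := by
  funext j
  rcases eq_or_ne j i with rfl | hj
  · exact hi
  rcases eq_or_ne j (i + 1) with rfl | hj1
  · exact hi1
  · rw [← h2.1 j hj hj1, h1.1 j hj hj1]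

/-- A left endpoint of an edge is a weight diagram if the right one is. -/
lemma wd_of_erelL {i : ℤ} {l' m : ℤ → WLabel} (hrel : ERel i l' m)
    (hm : IsWeightDiagram m) : IsWeightDiagram l' := by
  have : l' = patch m i (l' i) (l' (i + 1)) := by
    funext j
    rcases eq_or_ne j i with rfl | hj
    · rw [patch_i]
    rcases eq_or_ne j (i + 1) with rfl | hj1
    · rw [patch_i1]
    · rw [patch_off m i _ _ hj hj1, hrel.1 j hj hj1]
  rw [this]
  exact wd_patch hm i _ _

lemma card_zero {α : Type*} {P : α → Prop} (h : ∀ x, ¬ P x) : Nat.card {x // P x} = 0 := by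
  haveI : IsEmpty {x // P x} := ⟨fun ⟨x, hx⟩ => h x hx⟩
  exact Nat.card_of_isEmpty

lemma card_one {α : Type*} {P : α → Prop} (x : α) (hx : P x) (h : ∀ y, P y → y = x) :
    Nat.card {y // P y} = 1 := by
  haveI : Unique {y // P y} := ⟨⟨⟨x, hx⟩⟩, fun ⟨y, hy⟩ => Subtype.ext (h y hy)⟩
  exact Nat.card_unique

/-! ### Determinacy of patterns -/

lemma pat_det {a b : WLabel × WLabel} (hp : EPattern a b) :
    (a = (.down, .o) → b = (.o, .down)) ∧
    (a = (.up, .o) → b = (.o, .up)) ∧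
    (a = (.x, .down) → b = (.down, .x)) ∧
    (a = (.x, .up) → b = (.up, .x)) ∧
    (a = (.x, .o) → b = (.down, .up) ∨ b = (.up, .down)) ∧
    (a = (.down, .up) → b = (.o, .x)) ∧
    (a = (.up, .down) → b = (.o, .x)) := by
  rcases hp with ⟨h1, h2⟩ | ⟨h1, h2⟩ | ⟨h1, h2⟩ | ⟨h1, h2⟩ | ⟨h1, h2⟩ | ⟨h1, h2⟩ |
    ⟨h1, h2⟩ | ⟨h1, h2⟩ <;> subst h1 <;> subst h2 <;>
    refine ⟨?_, ?_, ?_, ?_, ?_, ?_, ?_⟩ <;> intro ha <;>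
    first
      | rfl
      | exact Or.inl rfl
      | exact Or.inr rfl
      | exact absurd ha (by decide)

lemma pat_detL {a b : WLabel × WLabel} (hp : EPattern a b) :
    (b = (.o, .down) → a = (.down, .o)) ∧
    (b = (.o, .up) → a = (.up, .o)) ∧
    (b = (.down, .x) → a = (.x, .down)) ∧
    (b = (.up, .x) → a = (.x, .up)) ∧
    (b = (.down, .up) → a = (.x, .o)) ∧
    (b = (.up, .down) → a = (.x, .o)) ∧
    (b = (.o, .x) → a = (.down, .up) ∨ a = (.up, .down)) := by
  rcases hp with ⟨h1, h2⟩ | ⟨h1, h2⟩ | ⟨h1, h2⟩ | ⟨h1, h2⟩ | ⟨h1, h2⟩ | ⟨h1, h2⟩ |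
    ⟨h1, h2⟩ | ⟨h1, h2⟩ <;> subst h1 <;> subst h2 <;>
    refine ⟨?_, ?_, ?_, ?_, ?_, ?_, ?_⟩ <;> intro ha <;>
    first
      | rfl
      | exact Or.inl rfl
      | exact Or.inr rfl
      | exact absurd ha (by decide)

/-! ### The two counting lemmas for the generic (rigid) cases -/

lemma rcount_zero {i : ℤ} {l m : ℤ → WLabel} (h : ERel i l m)
    (hu : ∀ b', EPattern (l i, l (i + 1)) b' → b' = (m i, m (i + 1))) :
    Nat.card {m' : ℤ → WLabel // ERel i l m' ∧ BruhatLT m' m} = 0 := by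
  apply card_zero
  rintro m' ⟨hrel, hlt⟩
  have hb := hu (m' i, m' (i + 1)) hrel.2
  rw [Prod.mk.injEq] at hb
  exact hlt.2 (erel_ext h hrel hb.1 hb.2)

lemma lcount_zero {i : ℤ} {l m : ℤ → WLabel} (h : ERel i l m)
    (hu : ∀ l', ERel i l' m → (l' i, l' (i + 1)) = (l i, l (i + 1))) :
    Nat.card {l' : ℤ → WLabel // ERel i l' m ∧ BruhatLT l l'} = 0 := by
  apply card_zero
  rintro l' ⟨hrel, hlt⟩
  have ha := hu l' hrel
  rw [Prod.mk.injEq] at ha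
  exact hlt.2 (erel_extL h hrel ha.1 ha.2).symm

end EDaux

open EDaux in
/-- the explicit values of the edge degrees for the eight local
moves `∨∘→∘∨`, `∧∘→∘∧`, `×∨→∨×`, `×∧→∧×`, `×∘→∨∧`, `×∘→∧∨`, `∨∧→∘×`,
`∧∨→∘×` are respectively `0, 0, 0, 0, 0, 1, −1, 0`. -/
theorem edgeDegree_values (i : ℤ) (l m : ℤ → WLabel)
    (hl : IsWeightDiagram l) (hm : IsWeightDiagram m) (h : ERel i l m) :
    ((l i, l (i + 1)) = (.down, .o) → edgeDegree i l m = 0) ∧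
    ((l i, l (i + 1)) = (.up, .o) → edgeDegree i l m = 0) ∧
    ((l i, l (i + 1)) = (.x, .down) → edgeDegree i l m = 0) ∧
    ((l i, l (i + 1)) = (.x, .up) → edgeDegree i l m = 0) ∧
    ((l i, l (i + 1)) = (.x, .o) → (m i, m (i + 1)) = (.down, .up) →
      edgeDegree i l m = 0) ∧
    ((l i, l (i + 1)) = (.x, .o) → (m i, m (i + 1)) = (.up, .down) →
      edgeDegree i l m = 1) ∧
    ((l i, l (i + 1)) = (.down, .up) → edgeDegree i l m = -1) ∧
    ((l i, l (i + 1)) = (.up, .down) → edgeDegree i l m = 0) := by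
  refine ⟨fun hc => ?_, fun hc => ?_, fun hc => ?_, fun hc => ?_, fun hc hmc => ?_,
    fun hc hmc => ?_, fun hc => ?_, fun hc => ?_⟩
  -- Case 1 : ∨∘ → ∘∨
  · have hb := (pat_det h.2).1 hc
    unfold edgeDegree
    rw [rcount_zero h (fun b' hp => by rw [hb]; exact (pat_det hp).1 hc),
      lcount_zero h (fun l' hrel => by rw [hc]; exact (pat_detL hrel.2).1 hb)]
    norm_num
  -- Case 2 : ∧∘ → ∘∧
  · have hb := (pat_det h.2).2.1 hc
    unfold edgeDegree
    rw [rcount_zero h (fun b' hp => by rw [hb]; exact (pat_det hp).2.1 hc),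
      lcount_zero h (fun l' hrel => by rw [hc]; exact (pat_detL hrel.2).2.1 hb)]
    norm_num
  -- Case 3 : ×∨ → ∨×
  · have hb := (pat_det h.2).2.2.1 hc
    unfold edgeDegree
    rw [rcount_zero h (fun b' hp => by rw [hb]; exact (pat_det hp).2.2.1 hc),
      lcount_zero h (fun l' hrel => by rw [hc]; exact (pat_detL hrel.2).2.2.1 hb)]
    norm_num
  -- Case 4 : ×∧ → ∧×
  · have hb := (pat_det h.2).2.2.2.1 hc
    unfold edgeDegree
    rw [rcount_zero h (fun b' hp => by rw [hb]; exact (pat_det hp).2.2.2.1 hc),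
      lcount_zero h (fun l' hrel => by rw [hc]; exact (pat_detL hrel.2).2.2.2.1 hb)]
    norm_num
  -- Case 5 : ×∘ → ∨∧
  · have hmc' := hmc
    rw [Prod.mk.injEq] at hmc'
    have hr : Nat.card {m' : ℤ → WLabel // ERel i l m' ∧ BruhatLT m' m} = 0 := by
      apply card_zero
      rintro m' ⟨hrel, hlt⟩
      rcases (pat_det hrel.2).2.2.2.2.1 hc with hb' | hb'
      · rw [Prod.mk.injEq] at hb'
        exact hlt.2 (erel_ext h hrel (by rw [hb'.1, hmc'.1]) (by rw [hb'.2, hmc'.2]))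
      · rw [Prod.mk.injEq] at hb'
        have hstep : BruhatStep m m' :=
          ⟨i, i + 1, by omega, hmc'.1, hmc'.2, hb'.1, hb'.2,
            fun x hx hx1 => by rw [hrel.1 x hx hx1, h.1 x hx hx1]⟩
        exact not_le_of_step hstep hm hlt.1
    unfold edgeDegree
    rw [hr, lcount_zero h (fun l' hrel => by
      rw [hc]; exact (pat_detL hrel.2).2.2.2.2.1 hmc)]
    norm_num
  -- Case 6 : ×∘ → ∧∨
  · have hmc' := hmc
    rw [Prod.mk.injEq] at hmc'
    have hx0rel : ERel i l (patch l i .down .up) :=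
      erel_patch (Or.inr (Or.inr (Or.inr (Or.inr (Or.inl ⟨hc, rfl⟩)))))
    have hstep : BruhatStep (patch l i .down .up) m :=
      ⟨i, i + 1, by omega, patch_i l i _ _, patch_i1 l i _ _, hmc'.1, hmc'.2,
        fun x hx hx1 => (h.1 x hx hx1).trans (patch_off l i _ _ hx hx1).symm⟩
    have hx0lt : BruhatLT (patch l i .down .up) m := by
      refine ⟨Relation.ReflTransGen.single hstep, fun he => ?_⟩
      have := congrFun he i
      rw [patch_i, hmc'.1] at this
      exact absurd this (by decide)
    have hr : Nat.card {m' : ℤ → WLabel // ERel i l m' ∧ BruhatLT m' m} = 1 := by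
      apply card_one (patch l i .down .up) ⟨hx0rel, hx0lt⟩
      rintro y ⟨hrel, hlt⟩
      rcases (pat_det hrel.2).2.2.2.2.1 hc with hb' | hb'
      · rw [Prod.mk.injEq] at hb'
        exact erel_ext hx0rel hrel (by rw [hb'.1, patch_i]) (by rw [hb'.2, patch_i1])
      · rw [Prod.mk.injEq] at hb'
        have hy : y = m := erel_ext h hrel (by rw [hb'.1, hmc'.1]) (by rw [hb'.2, hmc'.2])
        exact absurd hy hlt.2
    unfold edgeDegree
    rw [hr, lcount_zero h (fun l' hrel => by
      rw [hc]; exact (pat_detL hrel.2).2.2.2.2.2.1 hmc)]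
    norm_num
  -- Case 7 : ∨∧ → ∘×
  · have hb := (pat_det h.2).2.2.2.2.2.1 hc
    have hc' := hc
    rw [Prod.mk.injEq] at hc'
    have hx0rel : ERel i (patch l i .up .down) m := by
      refine ⟨fun j hj hj1 => (h.1 j hj hj1).trans (patch_off l i _ _ hj hj1).symm, ?_⟩
      rw [patch_i, patch_i1]
      exact Or.inr (Or.inr (Or.inr (Or.inr (Or.inr (Or.inr (Or.inr ⟨rfl, hb⟩))))))
    have hstep : BruhatStep l (patch l i .up .down) :=
      ⟨i, i + 1, by omega, hc'.1, hc'.2, patch_i l i _ _, patch_i1 l i _ _,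
        fun x hx hx1 => patch_off l i _ _ hx hx1⟩
    have hx0lt : BruhatLT l (patch l i .up .down) := by
      refine ⟨Relation.ReflTransGen.single hstep, fun he => ?_⟩
      have := congrFun he i
      rw [patch_i, hc'.1] at this
      exact absurd this (by decide)
    have hL : Nat.card {l' : ℤ → WLabel // ERel i l' m ∧ BruhatLT l l'} = 1 := by
      apply card_one (patch l i .up .down) ⟨hx0rel, hx0lt⟩
      rintro y ⟨hrel, hlt⟩
      rcases (pat_detL hrel.2).2.2.2.2.2.2 hb with ha' | ha'
      · have hy : y = l := by
          rw [Prod.mk.injEq] at ha'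
          exact erel_extL h hrel (by rw [ha'.1, hc'.1]) (by rw [ha'.2, hc'.2])
        exact absurd hy.symm hlt.2
      · rw [Prod.mk.injEq] at ha'
        exact erel_extL hx0rel hrel (by rw [ha'.1, patch_i]) (by rw [ha'.2, patch_i1])
    unfold edgeDegree
    rw [hL, rcount_zero h (fun b' hp => by rw [hb]; exact (pat_det hp).2.2.2.2.2.1 hc)]
    norm_num
  -- Case 8 : ∧∨ → ∘×
  · have hb := (pat_det h.2).2.2.2.2.2.2 hc
    have hc' := hc
    rw [Prod.mk.injEq] at hc'
    have hL : Nat.card {l' : ℤ → WLabel // ERel i l' m ∧ BruhatLT l l'} = 0 := by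
      apply card_zero
      rintro l' ⟨hrel, hlt⟩
      rcases (pat_detL hrel.2).2.2.2.2.2.2 hb with ha' | ha'
      · rw [Prod.mk.injEq] at ha'
        have hstep : BruhatStep l' l :=
          ⟨i, i + 1, by omega, ha'.1, ha'.2, hc'.1, hc'.2,
            fun x hx hx1 => (h.1 x hx hx1).symm.trans (hrel.1 x hx hx1)⟩
        exact not_le_of_step hstep (wd_of_erelL hrel hm) hlt.1
      · rw [Prod.mk.injEq] at ha'
        have hy : l' = l := erel_extL h hrel (by rw [ha'.1, hc'.1]) (by rw [ha'.2, hc'.2])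
        exact absurd hy.symm hlt.2
    unfold edgeDegree
    rw [hL, rcount_zero h (fun b' hp => by rw [hb]; exact (pat_det hp).2.2.2.2.2.2 hc)]
    norm_num
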